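/- Let 1 ≤ p < ∞ and 1 ≤ r ≤ ∞. If F : [0,∞) → [0,∞) is locally absolutely continuous with F ∈ Lᵖ([0,∞)), and G : [0,∞) → ℝ with G ∈ Lʳ([0,∞)) satisfies F'(t) ≤ G(t) for almost every t ≥ 0, then lim_{t→∞} F(t) = 0. -/

import Mathlib

open MeasureTheory

open Set Filter


lemma tail_tendsto_zero {h : ℝ → ℝ} {a : ℝ} (hi : IntegrableOn h (Set.Ioi a)) :
    Tendsto (fun X => ∫ x in Set.Ioi X, h x) atTop (nhds 0) := by
  have key : ∀ X, a ≤ X → ∫ x in Set.Ioi X, h x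
      = (∫ x in Set.Ioi a, h x) - ∫ x in a..X, h x := by
    intro X hX
    have hdis : Disjoint (Set.Ioc a X) (Set.Ioi X) := Set.Ioc_disjoint_Ioi le_rfl
    have h1 : IntegrableOn h (Set.Ioc a X) := hi.mono_set Set.Ioc_subset_Ioi_self
    have h2 : IntegrableOn h (Set.Ioi X) := hi.mono_set (Set.Ioi_subset_Ioi hX)
    have := setIntegral_union hdis measurableSet_Ioi h1 h2 (f := h) (μ := volume)
    rw [Set.Ioc_union_Ioi_eq_Ioi hX] at this
    rw [intervalIntegral.integral_of_le hX, this]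
    ring
  have hlim := intervalIntegral_tendsto_integral_Ioi a hi tendsto_id
  have : Tendsto (fun X => (∫ x in Set.Ioi a, h x) - ∫ x in a..X, h x) atTop
      (nhds ((∫ x in Set.Ioi a, h x) - ∫ x in Set.Ioi a, h x)) :=
    tendsto_const_nhds.sub hlim
  rw [sub_self] at this
  exact this.congr' (by filter_upwards [eventually_ge_atTop a] with X hX using (key X hX).symm)

-- On a finite-measure subinterval of [0,∞), G is integrable.
lemma G_int_sub {r : ENNReal} (hr : 1 ≤ r) {G : ℝ → ℝ}
    (hGLr : MemLp G r (volume.restrict (Set.Ici (0:ℝ))))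
    {s t : ℝ} (hs : 0 ≤ s) :
    IntegrableOn G (Set.Ioc s t) := by
  have hsub : Set.Ioc s t ⊆ Set.Ici (0:ℝ) := fun x hx => le_trans hs (le_of_lt hx.1)
  have hmono : volume.restrict (Set.Ioc s t) ≤ volume.restrict (Set.Ici (0:ℝ)) :=
    Measure.restrict_mono hsub le_rfl
  have h1 : MemLp G r (volume.restrict (Set.Ioc s t)) := hGLr.mono_measure hmono
  haveI : IsFiniteMeasure (volume.restrict (Set.Ioc s t)) := by
    constructor
    rw [Measure.restrict_apply_univ]
    exact measure_Ioc_lt_top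
  exact memLp_one_iff_integrable.mp (h1.mono_exponent hr)

-- Step B: uniform smallness of ∫ |G| over short intervals far to the right.
lemma stepB {r : ENNReal} (hr : 1 ≤ r) {G : ℝ → ℝ}
    (hGLr : MemLp G r (volume.restrict (Set.Ici (0:ℝ)))) {η : ℝ} (hη : 0 < η) :
    ∃ δ > (0:ℝ), ∃ T ≥ (0:ℝ), ∀ s t, T ≤ s → s ≤ t → t ≤ s + δ →
      ∫ x in Set.Ioc s t, |G x| ≤ η := by
  have habs : ∀ s t : ℝ, 0 ≤ s → IntegrableOn (fun x => |G x|) (Set.Ioc s t) :=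
    fun s t hs => (G_int_sub hr hGLr hs).abs
  rcases eq_or_ne r ⊤ with hrt | hrt
  · -- r = ∞ : |G| ≤ M a.e.
    subst hrt
    set M := (eLpNorm G ⊤ (volume.restrict (Set.Ici (0:ℝ)))).toReal with hM
    have hM0 : 0 ≤ M := ENNReal.toReal_nonneg
    refine ⟨η / (M + 1), by positivity, 0, le_rfl, fun s t hs hst htd => ?_⟩
    have hae : ∀ᵐ x ∂volume.restrict (Set.Ici (0:ℝ)), ‖G x‖ ≤ M := by
      have := ae_le_eLpNormEssSup (f := G) (μ := volume.restrict (Set.Ici (0:ℝ)))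
      filter_upwards [this] with x hx
      have hfin : eLpNormEssSup G (volume.restrict (Set.Ici (0:ℝ))) ≠ ⊤ := by
        have := hGLr.2
        rwa [eLpNorm_exponent_top, lt_top_iff_ne_top] at this
      have : (‖G x‖₊ : ENNReal).toReal ≤ M := by
        rw [hM, eLpNorm_exponent_top]
        exact ENNReal.toReal_mono hfin hx
      simpa using this
    have hsub : Set.Ioc s t ⊆ Set.Ici (0:ℝ) := fun x hx => le_trans hs (le_of_lt hx.1)
    have hae2 : ∀ᵐ x ∂volume.restrict (Set.Ioc s t), ‖|G x|‖ ≤ M := by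
      have := ae_restrict_of_ae_restrict_of_subset hsub hae
      filter_upwards [this] with x hx
      simpa using hx
    have hb := norm_setIntegral_le_of_norm_le_const_ae (C := M)
        (f := fun x => |G x|) (s := Set.Ioc s t) (μ := volume) measure_Ioc_lt_top hae2
    have hmeas : (volume (Set.Ioc s t)).toReal = t - s := by
      rw [Real.volume_Ioc, ENNReal.toReal_ofReal (by linarith)]
    calc ∫ x in Set.Ioc s t, |G x| ≤ ‖∫ x in Set.Ioc s t, |G x|‖ := le_abs_self _
      _ ≤ M * (volume (Set.Ioc s t)).toReal := hb
      _ = M * (t - s) := by rw [hmeas]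
      _ ≤ M * (η / (M + 1)) := by
          apply mul_le_mul_of_nonneg_left (by linarith) hM0
      _ ≤ (M + 1) * (η / (M + 1)) := by
          apply mul_le_mul_of_nonneg_right (by linarith) (by positivity)
      _ = η := by field_simp
  · -- r finite : |G| ≤ |G|^r̄ + 1 and tail of |G|^r̄ is small
    have hr0 : r ≠ 0 := by
      intro h; rw [h] at hr; exact absurd hr (by simp)
    set rR := r.toReal with hrR
    have hrR1 : 1 ≤ rR := by
      rw [hrR, ← ENNReal.toReal_one]
      exact ENNReal.toReal_mono hrt hr
    have hHint : IntegrableOn (fun x => |G x| ^ rR) (Set.Ici (0:ℝ)) := by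
      have := hGLr.integrable_norm_rpow hr0 hrt
      simpa [Real.norm_eq_abs, IntegrableOn] using this
    have hHint' : IntegrableOn (fun x => |G x| ^ rR) (Set.Ioi (0:ℝ)) :=
      hHint.mono_set Set.Ioi_subset_Ici_self
    have htail := tail_tendsto_zero hHint'
    have hev : ∀ᶠ X in atTop, ∫ x in Set.Ioi X, |G x| ^ rR < η / 2 := by
      have := htail.eventually (eventually_lt_nhds (by positivity : (0:ℝ) < η / 2))
      simpa using this
    obtain ⟨T, hT0, hT⟩ := ((eventually_ge_atTop (0:ℝ)).and hev).exists
    refine ⟨η / 2, by positivity, T, hT0, fun s t hs hst htd => ?_⟩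
    have hs0 : 0 ≤ s := le_trans hT0 hs
    have hint1 : IntegrableOn (fun x => |G x| ^ rR + 1) (Set.Ioc s t) := by
      apply Integrable.add
      · exact hHint.mono_set (fun x hx => le_trans hs0 (le_of_lt hx.1))
      · exact integrableOn_const measure_Ioc_lt_top.ne
    have hpt : ∀ x ∈ Set.Ioc s t, |G x| ≤ |G x| ^ rR + 1 := by
      intro x _
      rcases le_or_gt (|G x|) 1 with h1 | h1
      · have : (0:ℝ) ≤ |G x| ^ rR := Real.rpow_nonneg (abs_nonneg _) _
        linarith
      · have h2 := Real.rpow_le_rpow_of_exponent_le (le_of_lt h1) hrR1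
        rw [Real.rpow_one] at h2
        linarith
    have h1 : ∫ x in Set.Ioc s t, |G x| ≤ ∫ x in Set.Ioc s t, (|G x| ^ rR + 1) :=
      setIntegral_mono_on (habs s t hs0) hint1 measurableSet_Ioc hpt
    have h2 : ∫ x in Set.Ioc s t, (|G x| ^ rR + 1)
        = (∫ x in Set.Ioc s t, |G x| ^ rR) + (t - s) := by
      rw [integral_add (hHint.mono_set (fun x hx => le_trans hs0 (le_of_lt hx.1)))
        (integrableOn_const measure_Ioc_lt_top.ne)]
      simp [measureReal_def, Real.volume_Ioc, ENNReal.toReal_ofReal (show (0:ℝ) ≤ t - s by linarith)]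
    have h3 : ∫ x in Set.Ioc s t, |G x| ^ rR ≤ ∫ x in Set.Ioi T, |G x| ^ rR := by
      apply setIntegral_mono_set (hHint.mono_set (fun x hx => le_trans hT0 (le_of_lt hx)))
      · filter_upwards with x using Real.rpow_nonneg (abs_nonneg _) _
      · filter_upwards with x hx
        exact lt_of_le_of_lt hs hx.1
    have h4 : t - s ≤ η / 2 := by linarith
    linarith


/-- If `F : [0,∞) → [0,∞)` is locally absolutely continuous (`F t = F 0 + ∫₀ᵗ f`, `f`
integrable on compacts), `F ∈ Lᵖ([0,∞))` with `1 ≤ p < ∞`, and `f(t) ≤ G(t)` a.e. with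
`G ∈ Lʳ([0,∞))`, `1 ≤ r ≤ ∞`, then `F(t) → 0` as `t → ∞`. -/
theorem stmt_4 (p r : ENNReal) (hp : 1 ≤ p) (hp' : p < ⊤) (hr : 1 ≤ r) (hr' : r ≤ ⊤)
    (F G f : ℝ → ℝ)
    (hFpos : ∀ t : ℝ, 0 ≤ t → 0 ≤ F t)
    (hloc : ∀ T : ℝ, 0 < T → IntegrableOn f (Set.Icc 0 T))
    (hF : ∀ t : ℝ, 0 ≤ t → F t = F 0 + ∫ s in (0:ℝ)..t, f s)
    (hFLp : MemLp F p (volume.restrict (Set.Ici (0:ℝ))))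
    (hGLr : MemLp G r (volume.restrict (Set.Ici (0:ℝ))))
    (hle : ∀ᵐ t : ℝ, t ∈ Set.Ici (0:ℝ) → f t ≤ G t) :
    Filter.Tendsto F Filter.atTop (nhds 0) := by
  have hp0 : p ≠ 0 := by intro h; rw [h] at hp; exact absurd hp (by simp)
  have hpt : p ≠ ⊤ := hp'.ne
  set pR := p.toReal with hpR
  have hpR0 : 0 < pR := ENNReal.toReal_pos hp0 hpt
  -- |F|^pR integrable on [0,∞)
  have hFint : IntegrableOn (fun x => |F x| ^ pR) (Set.Ici (0:ℝ)) := by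
    have := hFLp.integrable_norm_rpow hp0 hpt
    simpa [Real.norm_eq_abs, IntegrableOn] using this
  rw [Metric.tendsto_atTop]
  intro ε hε
  obtain ⟨δ, hδ, T, hT0, hB⟩ := stepB hr hGLr (show (0:ℝ) < ε / 2 by positivity)
  -- tail of |F|^pR
  have htail := tail_tendsto_zero (hFint.mono_set Set.Ioi_subset_Ici_self)
  have hc : (0:ℝ) < (ε / 2) ^ pR * δ := by
    have := Real.rpow_pos_of_pos (show (0:ℝ) < ε / 2 by positivity) pR
    positivity
  have hev : ∀ᶠ X in atTop, ∫ x in Set.Ioi X, |F x| ^ pR < (ε / 2) ^ pR * δ := by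
    have := htail.eventually (eventually_lt_nhds hc)
    simpa using this
  obtain ⟨X, hXT, hX⟩ := ((eventually_ge_atTop T).and hev).exists
  refine ⟨X + δ + 1, fun t₀ ht₀ => ?_⟩
  have hX0 : 0 ≤ X := le_trans hT0 hXT
  have ht₀0 : 0 < t₀ := by linarith
  -- main claim : F t₀ < ε
  have hmain : F t₀ < ε := by
    by_contra hcon
    push_neg at hcon
    -- F s ≥ ε/2 on [t₀ - δ, t₀]
    have hlow : ∀ s ∈ Set.Icc (t₀ - δ) t₀, ε / 2 ≤ F s := by
      intro s hs
      have hs0 : 0 < s := by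
        have := hs.1; linarith
      have hTs : T ≤ s := by have := hs.1; linarith
      -- F t₀ - F s = ∫ s..t₀ f
      have hiv1 : IntervalIntegrable f volume 0 t₀ := by
        have := hloc t₀ ht₀0
        rw [← Set.uIcc_of_le (le_of_lt ht₀0)] at this
        exact this.intervalIntegrable
      have hiv2 : IntervalIntegrable f volume 0 s := by
        have := hloc s hs0
        rw [← Set.uIcc_of_le (le_of_lt hs0)] at this
        exact this.intervalIntegrable
      have hFTC : F t₀ - F s = ∫ x in s..t₀, f x := by
        rw [hF t₀ (le_of_lt ht₀0), hF s (le_of_lt hs0)]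
        rw [add_sub_add_left_eq_sub]
        exact intervalIntegral.integral_interval_sub_left hiv1 hiv2
      have hfint : IntegrableOn f (Set.Ioc s t₀) := by
        have := hloc t₀ ht₀0
        exact this.mono_set (fun x hx => ⟨le_trans (le_of_lt hs0) (le_of_lt hx.1), hx.2⟩)
      have hGint : IntegrableOn G (Set.Ioc s t₀) := G_int_sub hr hGLr (le_of_lt hs0)
      have hae : ∀ᵐ x ∂volume.restrict (Set.Ioc s t₀), f x ≤ G x := by
        have h1 := ae_restrict_of_ae (μ := volume) (s := Set.Ioc s t₀) hle
        have h2 := ae_restrict_mem (μ := volume) (measurableSet_Ioc (a := s) (b := t₀))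
        filter_upwards [h1, h2] with x hx hmem
        exact hx (le_trans (le_of_lt hs0) (le_of_lt hmem.1))
      have hstep : ∫ x in s..t₀, f x ≤ ε / 2 := by
        rw [intervalIntegral.integral_of_le hs.2]
        calc ∫ x in Set.Ioc s t₀, f x ≤ ∫ x in Set.Ioc s t₀, G x :=
              setIntegral_mono_ae_restrict hfint hGint hae
          _ ≤ ∫ x in Set.Ioc s t₀, |G x| :=
              setIntegral_mono hGint hGint.abs (fun x => le_abs_self _)
          _ ≤ ε / 2 := hB s t₀ hTs hs.2 (by linarith [hs.1])
      linarith [hFTC ▸ hstep, hcon]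
    -- lower bound on the tail integral
    have hIcc : IntegrableOn (fun x => |F x| ^ pR) (Set.Icc (t₀ - δ) t₀) :=
      hFint.mono_set (fun x hx => by have := hx.1; simp only [Set.mem_Ici]; linarith)
    have hlb : (ε / 2) ^ pR * δ ≤ ∫ x in Set.Icc (t₀ - δ) t₀, |F x| ^ pR := by
      have hconst : ∫ _x in Set.Icc (t₀ - δ) t₀, (ε / 2) ^ pR = (ε / 2) ^ pR * δ := by
        rw [setIntegral_const]
        rw [measureReal_def, Real.volume_Icc, ENNReal.toReal_ofReal (by linarith), smul_eq_mul]
        ring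
      rw [← hconst]
      apply setIntegral_mono_on (integrableOn_const measure_Icc_lt_top.ne) hIcc
        measurableSet_Icc
      intro x hx
      have h1 : ε / 2 ≤ F x := hlow x hx
      have h2 : |F x| = F x := abs_of_nonneg (by linarith)
      rw [h2]
      exact Real.rpow_le_rpow (by positivity) h1 (le_of_lt hpR0)
    have hub : ∫ x in Set.Icc (t₀ - δ) t₀, |F x| ^ pR ≤ ∫ x in Set.Ioi X, |F x| ^ pR := by
      apply setIntegral_mono_set (hFint.mono_set (fun x hx => le_trans hX0 (le_of_lt hx)))
      · filter_upwards with x using Real.rpow_nonneg (abs_nonneg _) _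
      · filter_upwards with x hx
        have hx' : x ∈ Set.Icc (t₀ - δ) t₀ := hx
        have h1 : t₀ - δ ≤ x := hx'.1
        have h2 : X < t₀ - δ := by linarith
        exact Set.mem_Ioi.mpr (lt_of_lt_of_le h2 h1)
    linarith
  rw [Real.dist_eq, sub_zero, abs_of_nonneg (hFpos t₀ (le_of_lt ht₀0))]
  exact hmain
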